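/- arXiv:2410.07750 — 3 statements merged into one kernel-verified Lean document; each statement's English description precedes it below -/
import Mathlib

section
/- Let a be a pure quaternion and B a nonzero quaternion. Then for every real number τ, the quaternion X_τ = -(τ + a)·B·i / |B|² satisfies X_τ ⋆ B = a. -/
open Quaternion

noncomputable def qi : Quaternion ℝ := ⟨0, 1, 0, 0⟩

noncomputable def qstar (A B : Quaternion ℝ) : Quaternion ℝ :=
  ((1 : ℝ) / 2) • (A * qi * star B + B * qi * star A)

/-- For pure `a` and nonzero `B`, every `X_τ = -(τ + a) B i / |B|²` solves `X ⋆ B = a`. -/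
theorem qstar_linear_solution (a B : Quaternion ℝ) (ha : a.re = 0) (hB : B ≠ 0) (τ : ℝ) :
    qstar ((‖B‖ ^ 2)⁻¹ • (-(((τ : ℝ) : Quaternion ℝ) + a) * B * qi)) B = a := by
  have hB2 : (‖B‖ ^ 2 : ℝ) ≠ 0 := pow_ne_zero _ (norm_ne_zero_iff.mpr hB)
  have hii : qi * qi = -1 := by
    ext <;> simp [show qi.re = 0 from rfl, show qi.imI = 1 from rfl, show qi.imJ = 0 from rfl, show qi.imK = 0 from rfl, Quaternion.re_mul, Quaternion.imI_mul, Quaternion.imJ_mul,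
      Quaternion.imK_mul]
  have hBB : B * star B = ((‖B‖ ^ 2 : ℝ) : Quaternion ℝ) := by
    rw [Quaternion.self_mul_star, Quaternion.normSq_eq_norm_mul_self, sq]
  have hsa : star a = -a := by
    ext <;> simp [ha]
  have hsi : star qi = -qi := by
    ext <;> simp [show qi.re = 0 from rfl, show qi.imI = 1 from rfl, show qi.imJ = 0 from rfl, show qi.imK = 0 from rfl]
  set c : ℝ := (‖B‖ ^ 2)⁻¹ with hc
  set t : Quaternion ℝ := ((τ : ℝ) : Quaternion ℝ) with ht
  have hstarY : star (-(t + a) * B * qi) = -qi * star B * (a - t) := by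
    simp only [star_mul, hsa, hsi, ht, Quaternion.star_coe, star_neg, star_add]
    noncomm_ring
  have h1 : (-(t + a) * B * qi) * qi * star B = (t + a) * ((‖B‖ ^ 2 : ℝ) : Quaternion ℝ) := by
    rw [mul_assoc (-(t + a) * B) qi qi, hii]
    rw [show -(t + a) * B * (-1 : Quaternion ℝ) = (t + a) * B by noncomm_ring]
    rw [mul_assoc, hBB]
  have h2 : B * qi * (-qi * star B * (a - t)) =
      ((‖B‖ ^ 2 : ℝ) : Quaternion ℝ) * (a - t) := by
    have e : B * qi * (-qi * star B * (a - t)) = B * (qi * -qi) * (star B * (a - t)) := by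
      noncomm_ring
    rw [e, show qi * -qi = (1 : Quaternion ℝ) by rw [mul_neg, hii]; simp]
    rw [mul_one, ← mul_assoc, hBB]
  have hcomm : (t + a) * ((‖B‖ ^ 2 : ℝ) : Quaternion ℝ) =
      ((‖B‖ ^ 2 : ℝ) : Quaternion ℝ) * (t + a) := (Quaternion.coe_commutes _ _).symm
  have hX : star (c • (-(t + a) * B * qi)) = c • (-qi * star B * (a - t)) := by
    rw [Quaternion.star_smul, hstarY]
  rw [qstar, hX, smul_mul_assoc, smul_mul_assoc, h1, hcomm, mul_smul_comm, h2, ← smul_add,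
    ← mul_add]
  have hsum : (t + a) + (a - t) = (2 : ℝ) • a := by
    ext <;> simp [ht] <;> ring
  rw [hsum, Quaternion.coe_mul_eq_smul, smul_smul, smul_smul, smul_smul]
  rw [show (1 : ℝ) / 2 * c * ‖B‖ ^ 2 * 2 = 1 by field_simp; rw [hc]; exact inv_mul_cancel₀ hB2, one_smul]
end

section
/- Let a be a pure quaternion and B a nonzero quaternion. Every quaternion X solving X ⋆ B = a is of the form X = -(τ + a)·B·i / |B|² for some real number τ. -/
open Quaternion

/-- For pure `a` and nonzero `B`, every solution of `X ⋆ B = a` has the stated form. -/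
theorem qstar_linear_solution_form (a B : Quaternion ℝ) (ha : a.re = 0) (hB : B ≠ 0)
    (X : Quaternion ℝ) (hX : qstar X B = a) :
    ∃ τ : ℝ, X = (‖B‖ ^ 2)⁻¹ • (-(((τ : ℝ) : Quaternion ℝ) + a) * B * qi) := by
  set q : Quaternion ℝ := X * qi * star B with hqdef
  have hstar_qi : star qi = -qi := by
    ext <;> simp <;> simp [qi]
  have hqi_sq : qi * qi = -1 := by
    ext <;> simp [Quaternion.re_mul, Quaternion.imI_mul, Quaternion.imJ_mul,
      Quaternion.imK_mul] <;> simp [qi]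
  have hrev : B * qi * star X = - star q := by
    rw [hqdef, star_mul, star_mul, star_star, hstar_qi]
    noncomm_ring
  have hXa : ((1:ℝ)/2) • (q - star q) = a := by
    have h := hX
    unfold qstar at h
    rw [hrev] at h
    rw [← h, hqdef, sub_eq_add_neg]
  have hq : q = ((q.re : ℝ) : Quaternion ℝ) + a := by
    have h1 := congrArg QuaternionAlgebra.imI hXa
    have h2 := congrArg QuaternionAlgebra.imJ hXa
    have h3 := congrArg QuaternionAlgebra.imK hXa
    simp at h1 h2 h3
    ext <;> simp [ha] <;> linarith
  refine ⟨q.re, ?_⟩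
  have hne : qi * star B ≠ 0 := by
    apply mul_ne_zero
    · intro h
      have := congrArg QuaternionAlgebra.imI h
      simp [qi] at this
    · simpa using hB
  apply mul_right_cancel₀ hne
  have hnorm : (‖B‖ ^ 2 : ℝ) ≠ 0 := pow_ne_zero 2 (norm_ne_zero_iff.mpr hB)
  have hBB : B * star B = ((‖B‖ ^ 2 : ℝ) : Quaternion ℝ) := by
    rw [Quaternion.self_mul_star, Quaternion.normSq_eq_norm_mul_self, sq]
  set c : Quaternion ℝ := ((q.re : ℝ) : Quaternion ℝ) + a with hc
  have key : (-c * B * qi) * (qi * star B) = c * (B * star B) := by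
    have h1 : (-c * B * qi) * (qi * star B) = -c * (B * (qi * qi) * star B) := by
      noncomm_ring
    rw [h1, hqi_sq]
    noncomm_ring
  calc X * (qi * star B) = q := by rw [hqdef]; noncomm_ring
    _ = c := hq
    _ = (‖B‖ ^ 2)⁻¹ • (-c * B * qi) * (qi * star B) := by
        rw [smul_mul_assoc, key, hBB, Quaternion.mul_coe_eq_smul, inv_smul_smul₀ hnorm]
end

section
/- Let a be a nonzero pure quaternion that is not a negative real multiple of i. Then for every angle φ, the quaternion X_φ = √|a| · ((a/|a| + i)/|a/|a| + i|) · (cos φ + i sin φ) satisfies X_φ ⋆ X_φ = a. -/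
open Quaternion

/-- The unit quaternion `Q(φ) = cos φ + i sin φ`. -/
noncomputable def Qphi (φ : ℝ) : Quaternion ℝ := ⟨Real.cos φ, Real.sin φ, 0, 0⟩

lemma Qphi_conj (φ : ℝ) : Qphi φ * qi * star (Qphi φ) = qi := by
  ext <;> simp only [Quaternion.re_mul, Quaternion.imI_mul, Quaternion.imJ_mul, Quaternion.imK_mul, Quaternion.re_star, Quaternion.imI_star, Quaternion.imJ_star, Quaternion.imK_star] <;> simp [Qphi, qi, Quaternion.re_mul, Quaternion.imI_mul, Quaternion.imJ_mul,
    Quaternion.imK_mul] <;> nlinarith [Real.sin_sq_add_cos_sq φ]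

lemma pure_conj (b : Quaternion ℝ) (hb : b.re = 0) (h1 : normSq b = 1) :
    (b + qi) * qi * star (b + qi) = (2 * (1 + b.imI)) • b := by
  have h1' : b.imI ^ 2 + b.imJ ^ 2 + b.imK ^ 2 = 1 := by
    have := Quaternion.normSq_def' b; rw [h1] at this; nlinarith
  ext <;> simp only [Quaternion.re_mul, Quaternion.imI_mul, Quaternion.imJ_mul, Quaternion.imK_mul, Quaternion.re_star, Quaternion.imI_star, Quaternion.imJ_star, Quaternion.imK_star, Quaternion.re_add, Quaternion.imI_add, Quaternion.imJ_add, Quaternion.imK_add] <;> simp [qi, Quaternion.re_mul, Quaternion.imI_mul, Quaternion.imJ_mul,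
    Quaternion.imK_mul, hb] <;> nlinarith [h1']

lemma qstar_self (A : Quaternion ℝ) : qstar A A = A * qi * star A := by
  rw [qstar, ← two_smul ℝ, smul_smul]
  norm_num

lemma smul_conj (c : ℝ) (B : Quaternion ℝ) :
    (c • B) * qi * star (c • B) = (c * c) • (B * qi * star B) := by
  simp [Quaternion.star_smul, smul_mul_assoc, mul_smul_comm, smul_smul]

/-- For a pure quaternion `a`, nonzero and not a negative real multiple of `i`,
`X_φ = √|a| ((a/|a| + i)/|a/|a| + i|) Q(φ)` solves `X ⋆ X = a` for every angle `φ`. -/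
theorem qstar_sqrt_solution (a : Quaternion ℝ) (ha : a.re = 0) (ha0 : a ≠ 0)
    (hni : ¬ ∃ c : ℝ, c < 0 ∧ a = c • qi) (φ : ℝ) :
    qstar (Real.sqrt ‖a‖ • ((‖(‖a‖⁻¹ • a + qi)‖)⁻¹ • (‖a‖⁻¹ • a + qi) * Qphi φ))
          (Real.sqrt ‖a‖ • ((‖(‖a‖⁻¹ • a + qi)‖)⁻¹ • (‖a‖⁻¹ • a + qi) * Qphi φ)) = a := by
  set r : ℝ := ‖a‖ with hr
  have hr0 : 0 < r := norm_pos_iff.mpr ha0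
  set n : Quaternion ℝ := r⁻¹ • a with hn
  have haa : a = r • n := by rw [hn, smul_smul, mul_inv_cancel₀ hr0.ne', one_smul]
  have hnre : n.re = 0 := by simp [hn, ha]
  have hns : normSq n = 1 := by
    rw [hn, normSq_smul, normSq_eq_norm_mul_self]
    field_simp
    rw [← hr]
  set s : ℝ := ‖n + qi‖ with hs
  have hs0 : s ≠ 0 := by
    intro h
    have hnq : n + qi = 0 := norm_eq_zero.mp h
    apply hni
    refine ⟨-r, by linarith, ?_⟩
    have hne : n = -qi := by linear_combination (norm := module) hnq
    rw [haa, hne, neg_smul, smul_neg]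
  have hs2 : s * s = 2 * (1 + n.imI) := by
    rw [hs, ← normSq_eq_norm_mul_self, Quaternion.normSq_def']
    have hn' := Quaternion.normSq_def' n
    rw [hns, hnre] at hn'
    simp only [Quaternion.re_add, Quaternion.imI_add, Quaternion.imJ_add, Quaternion.imK_add]
    simp [qi, hnre]
    nlinarith [hn']
  have hX : Real.sqrt r • (s⁻¹ • (n + qi) * Qphi φ)
      = (Real.sqrt r * s⁻¹) • ((n + qi) * Qphi φ) := by
    rw [smul_mul_assoc, smul_smul]
  rw [qstar_self, hX, smul_conj]
  have hB : ((n + qi) * Qphi φ) * qi * star ((n + qi) * Qphi φ)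
      = (2 * (1 + n.imI)) • n := by
    rw [star_mul, show ((n + qi) * Qphi φ) * qi * (star (Qphi φ) * star (n + qi))
        = (n + qi) * (Qphi φ * qi * star (Qphi φ)) * star (n + qi) by noncomm_ring,
      Qphi_conj, pure_conj n hnre hns]
  rw [hB, smul_smul]
  have hc : Real.sqrt r * s⁻¹ * (Real.sqrt r * s⁻¹) * (2 * (1 + n.imI)) = r := by
    rw [← hs2]
    have hsq := Real.mul_self_sqrt hr0.le
    field_simp
    nlinarith [hsq]
  rw [hc, haa]
end
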